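/- Let q ≥ 1 be an integer, B a q×q real matrix with nonnegative entries, and R, C ∈ ℝ^q vectors with nonnegative entries. Define x*_{ij} = B_{ij}·R_i·C_j, α_i = ∑_j x*_{ij} and β_j = ∑_i x*_{ij}. Then for every x : [q]×[q] → ℝ with x_{ij} ≥ 0 for all i,j, x_{ij} = 0 whenever B_{ij} = 0, ∑_j x_{ij} = α_i for all i and ∑_i x_{ij} = β_j for all j, one has ∑_{i,j} x_{ij}(ln B_{ij} − ln x_{ij}) ≤ ∑_{i,j} x*_{ij}(ln B_{ij} − ln x*_{ij}) = −∑_{i,j} B_{ij}·R_i·C_j·ln(R_i·C_j), with equality if and only if x = x*. -/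

import Mathlib

open Matrix

lemma me_aux_ineq (a b : ℝ) (ha : 0 ≤ a) (hb : 0 ≤ b) (h : a ≠ 0 → 0 < b) :
    a * (Real.log b - Real.log a) ≤ b - a := by
  rcases eq_or_ne a 0 with h0 | h0
  · simp [h0, hb]
  · have ha' : 0 < a := ha.lt_of_ne' h0
    have hb' : 0 < b := h h0
    have hlog : Real.log (b / a) ≤ b / a - 1 :=
      Real.log_le_sub_one_of_pos (div_pos hb' ha')
    rw [Real.log_div hb'.ne' ha'.ne'] at hlog
    calc a * (Real.log b - Real.log a) ≤ a * (b / a - 1) :=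
          mul_le_mul_of_nonneg_left hlog ha
      _ = b - a := by field_simp

lemma me_aux_eq (a b : ℝ) (ha : 0 ≤ a) (hb : 0 ≤ b) (h : a ≠ 0 → 0 < b)
    (heq : a * (Real.log b - Real.log a) = b - a) : a = b := by
  rcases eq_or_ne a 0 with h0 | h0
  · subst h0; simp at heq; linarith
  · have ha' : 0 < a := ha.lt_of_ne' h0
    have hb' : 0 < b := h h0
    by_contra hne
    have hba : b / a ≠ 1 := by
      intro hh
      exact hne ((div_eq_one_iff_eq ha'.ne').1 hh).symm
    have hlog : Real.log (b / a) < b / a - 1 :=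
      Real.log_lt_sub_one_of_pos (div_pos hb' ha') hba
    rw [Real.log_div hb'.ne' ha'.ne'] at hlog
    have : a * (Real.log b - Real.log a) < a * (b / a - 1) :=
      (mul_lt_mul_iff_right₀ ha').2 hlog
    have h2 : a * (b / a - 1) = b - a := by field_simp
    rw [heq, h2] at this
    exact lt_irrefl _ this

/-- maximum-entropy property of x*_{ij} = B_{ij} R_i C_j among all
nonnegative x with the same row and column margins, with uniqueness of the maximizer,
and the closed form of the maximum value. -/
theorem max_entropy_configuration
    (q : ℕ) (hq : 1 ≤ q) (B : Matrix (Fin q) (Fin q) ℝ)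
    (hBnonneg : ∀ i j, 0 ≤ B i j)
    (R C : Fin q → ℝ) (hR : ∀ i, 0 ≤ R i) (hC : ∀ j, 0 ≤ C j) :
    ∀ x : Fin q → Fin q → ℝ,
      (∀ i j, 0 ≤ x i j) →
      (∀ i j, B i j = 0 → x i j = 0) →
      (∀ i, (∑ j, x i j) = ∑ j, B i j * R i * C j) →
      (∀ j, (∑ i, x i j) = ∑ i, B i j * R i * C j) →
      ((∑ i, ∑ j, x i j * (Real.log (B i j) - Real.log (x i j)) ≤
          ∑ i, ∑ j, (B i j * R i * C j) * (Real.log (B i j) - Real.log (B i j * R i * C j))) ∧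
        (∑ i, ∑ j, (B i j * R i * C j) * (Real.log (B i j) - Real.log (B i j * R i * C j)) =
          -∑ i, ∑ j, B i j * R i * C j * Real.log (R i * C j)) ∧
        ((∑ i, ∑ j, x i j * (Real.log (B i j) - Real.log (x i j)) =
            ∑ i, ∑ j, (B i j * R i * C j) * (Real.log (B i j) - Real.log (B i j * R i * C j)))
          ↔ x = fun i j => B i j * R i * C j)) := by
  intro x hxnn hxB hrow hcol
  set y : Fin q → Fin q → ℝ := fun i j => B i j * R i * C j with hy
  -- If R i = 0 then the whole row of x vanishes
  have hR0 : ∀ i, R i = 0 → ∀ j, x i j = 0 := by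
    intro i h0 j
    have hs : ∑ j, x i j = 0 := by
      rw [hrow]; apply Finset.sum_eq_zero; intro k _; rw [h0]; ring
    exact (Finset.sum_eq_zero_iff_of_nonneg (fun k _ => hxnn i k)).1 hs j (Finset.mem_univ j)
  have hC0 : ∀ j, C j = 0 → ∀ i, x i j = 0 := by
    intro j h0 i
    have hs : ∑ i, x i j = 0 := by
      rw [hcol]; apply Finset.sum_eq_zero; intro k _; rw [h0]; ring
    exact (Finset.sum_eq_zero_iff_of_nonneg (fun k _ => hxnn k j)).1 hs i (Finset.mem_univ i)
  have hpos : ∀ i j, x i j ≠ 0 → 0 < B i j ∧ 0 < R i ∧ 0 < C j := by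
    intro i j hne
    refine ⟨(hBnonneg i j).lt_of_ne' ?_, (hR i).lt_of_ne' ?_, (hC j).lt_of_ne' ?_⟩
    · exact fun h => hne (hxB i j h)
    · exact fun h => hne (hR0 i h j)
    · exact fun h => hne (hC0 j h i)
  have hypos : ∀ i j, x i j ≠ 0 → 0 < y i j := by
    intro i j hne
    obtain ⟨h1, h2, h3⟩ := hpos i j hne
    exact mul_pos (mul_pos h1 h2) h3
  -- pointwise identity for x
  have ident_x : ∀ i j, x i j * (Real.log (B i j) - Real.log (x i j))
      = x i j * (Real.log (y i j) - Real.log (x i j))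
        - x i j * Real.log (R i) - x i j * Real.log (C j) := by
    intro i j
    rcases eq_or_ne (x i j) 0 with h0 | h0
    · simp [h0]
    · obtain ⟨h1, h2, h3⟩ := hpos i j h0
      have : Real.log (y i j) = Real.log (B i j) + Real.log (R i) + Real.log (C j) := by
        rw [hy]
        rw [Real.log_mul (by positivity) h3.ne', Real.log_mul h1.ne' h2.ne']
      rw [this]; ring
  -- pointwise identity for y
  have ident_y : ∀ i j, y i j * (Real.log (B i j) - Real.log (y i j))
      = y i j * (Real.log (y i j) - Real.log (y i j))
        - y i j * Real.log (R i) - y i j * Real.log (C j) := by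
    intro i j
    rcases eq_or_ne (y i j) 0 with h0 | h0
    · simp [h0]
    · have h1 : B i j ≠ 0 := fun h => h0 (by simp [hy, h])
      have h2 : R i ≠ 0 := fun h => h0 (by simp [hy, h])
      have h3 : C j ≠ 0 := fun h => h0 (by simp [hy, h])
      have : Real.log (y i j) = Real.log (B i j) + Real.log (R i) + Real.log (C j) := by
        rw [hy]
        rw [Real.log_mul (mul_ne_zero h1 h2) h3, Real.log_mul h1 h2]
      rw [this]; ring
  -- generic sum decomposition
  have sum_decomp : ∀ z : Fin q → Fin q → ℝ,
      (∀ i j, z i j * (Real.log (B i j) - Real.log (z i j))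
        = z i j * (Real.log (y i j) - Real.log (z i j))
          - z i j * Real.log (R i) - z i j * Real.log (C j)) →
      (∀ i, (∑ j, z i j) = ∑ j, y i j) → (∀ j, (∑ i, z i j) = ∑ i, y i j) →
      ∑ i, ∑ j, z i j * (Real.log (B i j) - Real.log (z i j))
        = (∑ i, ∑ j, z i j * (Real.log (y i j) - Real.log (z i j)))
          - (∑ i, (∑ j, y i j) * Real.log (R i))
          - (∑ j, (∑ i, y i j) * Real.log (C j)) := by
    intro z hid hr hc
    have e1 : ∀ i, ∑ j, z i j * (Real.log (B i j) - Real.log (z i j))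
        = (∑ j, z i j * (Real.log (y i j) - Real.log (z i j)))
          - (∑ j, z i j * Real.log (R i)) - (∑ j, z i j * Real.log (C j)) := by
      intro i
      rw [← Finset.sum_sub_distrib, ← Finset.sum_sub_distrib]
      exact Finset.sum_congr rfl fun j _ => hid i j
    calc ∑ i, ∑ j, z i j * (Real.log (B i j) - Real.log (z i j))
        = ∑ i, ((∑ j, z i j * (Real.log (y i j) - Real.log (z i j)))
            - (∑ j, z i j * Real.log (R i)) - (∑ j, z i j * Real.log (C j))) :=
          Finset.sum_congr rfl fun i _ => e1 i
      _ = (∑ i, ∑ j, z i j * (Real.log (y i j) - Real.log (z i j)))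
            - (∑ i, ∑ j, z i j * Real.log (R i))
            - (∑ i, ∑ j, z i j * Real.log (C j)) := by
          rw [← Finset.sum_sub_distrib, ← Finset.sum_sub_distrib]
      _ = (∑ i, ∑ j, z i j * (Real.log (y i j) - Real.log (z i j)))
            - (∑ i, (∑ j, y i j) * Real.log (R i))
            - (∑ j, (∑ i, y i j) * Real.log (C j)) := by
          congr 1
          · congr 1
            refine Finset.sum_congr rfl fun i _ => ?_
            rw [← Finset.sum_mul, hr i]
          · rw [Finset.sum_comm]
            refine Finset.sum_congr rfl fun j _ => ?_
            rw [← Finset.sum_mul, hc j]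
  have dx := sum_decomp x ident_x hrow hcol
  have dy := sum_decomp y ident_y (fun _ => rfl) (fun _ => rfl)
  have dy0 : ∑ i, ∑ j, y i j * (Real.log (y i j) - Real.log (y i j)) = 0 := by
    apply Finset.sum_eq_zero; intro i _; apply Finset.sum_eq_zero; intro j _; simp
  -- the gap
  have key : ∑ i, ∑ j, y i j * (Real.log (B i j) - Real.log (y i j))
      - ∑ i, ∑ j, x i j * (Real.log (B i j) - Real.log (x i j))
      = ∑ i, ∑ j, ((y i j - x i j) - x i j * (Real.log (y i j) - Real.log (x i j))) := by
    have hsum0 : ∑ i, ∑ j, (y i j - x i j) = 0 := by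
      apply Finset.sum_eq_zero; intro i _
      rw [Finset.sum_sub_distrib, hrow i, sub_self]
    rw [dx, dy, dy0]
    have hsplit : ∑ i, ∑ j, ((y i j - x i j) - x i j * (Real.log (y i j) - Real.log (x i j)))
        = (∑ i, ∑ j, (y i j - x i j))
          - ∑ i, ∑ j, x i j * (Real.log (y i j) - Real.log (x i j)) := by
      rw [← Finset.sum_sub_distrib]
      exact Finset.sum_congr rfl fun i _ => Finset.sum_sub_distrib _ _
    rw [hsplit, hsum0]; ring
  have term_nn : ∀ i j, 0 ≤ (y i j - x i j) - x i j * (Real.log (y i j) - Real.log (x i j)) := by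
    intro i j
    have := me_aux_ineq (x i j) (y i j) (hxnn i j)
      (mul_nonneg (mul_nonneg (hBnonneg i j) (hR i)) (hC j)) (hypos i j)
    linarith
  have gap_nn : 0 ≤ ∑ i, ∑ j, ((y i j - x i j) - x i j * (Real.log (y i j) - Real.log (x i j))) :=
    Finset.sum_nonneg fun i _ => Finset.sum_nonneg fun j _ => term_nn i j
  refine ⟨by linarith [key, gap_nn], ?_, ?_⟩
  · -- closed form
    rw [← Finset.sum_neg_distrib]
    refine Finset.sum_congr rfl fun i _ => ?_
    rw [← Finset.sum_neg_distrib]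
    refine Finset.sum_congr rfl fun j _ => ?_
    rcases eq_or_ne (y i j) 0 with h0 | h0
    · have : B i j * R i * C j = 0 := h0
      rw [this]; ring
    · have h1 : B i j ≠ 0 := fun h => h0 (by simp [hy, h])
      have h2 : R i ≠ 0 := fun h => h0 (by simp [hy, h])
      have h3 : C j ≠ 0 := fun h => h0 (by simp [hy, h])
      show B i j * R i * C j * (Real.log (B i j) - Real.log (B i j * R i * C j))
        = -(B i j * R i * C j * Real.log (R i * C j))
      rw [Real.log_mul (mul_ne_zero h1 h2) h3, Real.log_mul h1 h2, Real.log_mul h2 h3]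
      ring
  · constructor
    · intro heq
      have hzero : ∑ i, ∑ j, ((y i j - x i j) - x i j * (Real.log (y i j) - Real.log (x i j))) = 0 := by
        rw [← key, heq, sub_self]
      have hterm : ∀ i j, (y i j - x i j) - x i j * (Real.log (y i j) - Real.log (x i j)) = 0 := by
        intro i j
        have h1 := (Finset.sum_eq_zero_iff_of_nonneg
          (fun i _ => Finset.sum_nonneg fun j _ => term_nn i j)).1 hzero i (Finset.mem_univ i)
        exact (Finset.sum_eq_zero_iff_of_nonneg (fun j _ => term_nn i j)).1 h1 j (Finset.mem_univ j)
      funext i j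
      have := me_aux_eq (x i j) (y i j) (hxnn i j)
        (mul_nonneg (mul_nonneg (hBnonneg i j) (hR i)) (hC j)) (hypos i j)
        (by linarith [hterm i j])
      exact this
    · intro heq
      subst heq
      rfl
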